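/- For every exponent q in (1,2] and all vectors v, w in ℝ^k, one has |v+w|^q ≤ (3-q)|v|^q + q|w|^{q-2}⟨v,w⟩ + |w|^q. -/

import Mathlib

open Real

/-- Tangent line bound for concave rpow: for `0 ≤ p ≤ 1`. -/
lemma tangent_rpow {p x y : ℝ} (hp0 : 0 ≤ p) (hp1 : p ≤ 1) (hx : 0 ≤ x) (hy : 0 < y) :
    x ^ p ≤ y ^ p + p * y ^ (p - 1) * (x - y) := by
  have h := Real.geom_mean_le_arith_mean2_weighted hp0 (by linarith : (0:ℝ) ≤ 1 - p) hx hy.le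
    (by ring)
  have hyp : (0:ℝ) < y ^ (p - 1) := Real.rpow_pos_of_pos hy _
  have key : x ^ p * y ^ (1 - p) * y ^ (p - 1) ≤ (p * x + (1 - p) * y) * y ^ (p - 1) :=
    mul_le_mul_of_nonneg_right h hyp.le
  have e1 : x ^ p * y ^ (1 - p) * y ^ (p - 1) = x ^ p := by
    rw [mul_assoc, ← Real.rpow_add hy]
    norm_num
  have e2 : y ^ (p - 1) * y = y ^ p := by
    nth_rewrite 2 [← Real.rpow_one y]
    rw [← Real.rpow_add hy]
    ring_nf
  have e3 : (p * x + (1 - p) * y) * y ^ (p - 1) = y ^ p + p * y ^ (p - 1) * (x - y) := by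
    rw [← e2]; ring
  rw [e1, e3] at key
  exact key

/-- Inequality (I): `q * 2^(2-q) ≤ 2 * (3-q)` for `1 ≤ q ≤ 2`. -/
lemma ineq_I {q : ℝ} (hq1 : 1 ≤ q) (hq2 : q ≤ 2) : q * 2 ^ (2 - q) ≤ 2 * (3 - q) := by
  set u : ℝ := 2 - q with hu
  have hu0 : 0 ≤ u := by linarith
  have hu1 : u ≤ 1 := by linarith
  have hl : Real.log 2 < 0.6931471808 := Real.log_two_lt_d9
  have hl0 : 0 < Real.log 2 := Real.log_pos (by norm_num)
  have hden : 0 < 1 - u * Real.log 2 := by nlinarith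
  have hA0 : (0:ℝ) < 2 ^ (2 - q) := Real.rpow_pos_of_pos (by norm_num) _
  have hAe : (2:ℝ) ^ (2 - q) = Real.exp (Real.log 2 * u) := by
    rw [Real.rpow_def_of_pos (by norm_num)]
  have hexp : 1 - u * Real.log 2 ≤ Real.exp (-(Real.log 2 * u)) := by
    have := Real.add_one_le_exp (-(Real.log 2 * u))
    linarith
  have hAb : (2:ℝ) ^ (2 - q) * (1 - u * Real.log 2) ≤ 1 := by
    calc (2:ℝ) ^ (2 - q) * (1 - u * Real.log 2)
        ≤ 2 ^ (2 - q) * Real.exp (-(Real.log 2 * u)) :=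
          mul_le_mul_of_nonneg_left hexp hA0.le
      _ = 1 := by rw [hAe, ← Real.exp_add]; simp
  rw [show (q : ℝ) = 2 - u by rw [hu]; ring, show (3 - (2 - u) : ℝ) = 1 + u by ring]
  have hq0 : 0 < 2 - u := by linarith
  rw [← sub_nonneg]
  have key : 0 ≤ (2 * (1 + u) - (2 - u) * 2 ^ (2 - q)) * (1 - u * Real.log 2) := by
    nlinarith [mul_le_mul_of_nonneg_left hAb hq0.le,
      mul_nonneg (mul_nonneg (sub_nonneg.mpr hu1) hu0) hl0.le,
      mul_nonneg hu0 (by linarith : (0:ℝ) ≤ 0.6931471808 - Real.log 2)]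
  nlinarith [mul_pos hA0 hden]

lemma ineq_II_norm {q : ℝ} (hq1 : 1 < q) (hq2 : q ≤ 2) {u : ℝ} (hu : 2 ≤ u) :
    (u - 1) ^ q + q * u ≤ (3 - q) * u ^ q + 1 := by
  have hq0 : (0:ℝ) < q := by linarith
  set F : ℝ → ℝ := fun x => (3 - q) * x ^ q - (x - 1) ^ q - q * x with hF
  have hF' : ∀ x ∈ Set.Ici (2:ℝ),
      HasDerivAt F ((3 - q) * (q * x ^ (q - 1)) - 1 * q * (x - 1) ^ (q - 1) - q) x := by
    intro x hx
    have hx2 : (2:ℝ) ≤ x := hx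
    have hx0 : (0:ℝ) < x := by linarith
    have hx1 : (0:ℝ) < x - 1 := by linarith
    have h1 : HasDerivAt (fun y : ℝ => y ^ q) (q * x ^ (q - 1)) x :=
      Real.hasDerivAt_rpow_const (Or.inl hx0.ne')
    have h2 : HasDerivAt (fun y : ℝ => (y - 1) ^ q) (1 * q * (x - 1) ^ (q - 1)) x := by
      exact ((hasDerivAt_id x).sub_const 1).rpow_const (Or.inl hx1.ne')
    have h3 : HasDerivAt (fun y : ℝ => q * y) q x := by
      simpa using (hasDerivAt_id x).const_mul q
    exact ((h1.const_mul (3 - q)).sub h2).sub h3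
  have hderiv_nonneg : ∀ x ∈ interior (Set.Ici (2:ℝ)), 0 ≤ deriv F x := by
    intro x hx
    rw [interior_Ici] at hx
    have hx2 : (2:ℝ) < x := hx
    have hx0 : (0:ℝ) < x := by linarith
    have hx1 : (0:ℝ) ≤ x - 1 := by linarith
    rw [(hF' x (le_of_lt hx2)).deriv]
    -- tangent bound : (x-1)^(q-1) ≤ x^(q-1) - (q-1) * x^(q-2)
    have htan := tangent_rpow (p := q - 1) (x := x - 1) (y := x)
      (by linarith) (by linarith) hx1 hx0
    have htan' : (x - 1) ^ (q - 1) ≤ x ^ (q - 1) - (q - 1) * x ^ (q - 2) := by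
      have e : x ^ (q - 1) + (q - 1) * x ^ (q - 1 - 1) * (x - 1 - x)
          = x ^ (q - 1) - (q - 1) * x ^ (q - 2) := by
        rw [show q - 1 - 1 = q - 2 by ring]; ring
      linarith [htan, e ▸ htan]
    -- AM-GM : 1 ≤ (2-q) * x^(q-1) + (q-1) * x^(q-2)
    have hamgm : 1 ≤ (2 - q) * x ^ (q - 1) + (q - 1) * x ^ (q - 2) := by
      have h := Real.geom_mean_le_arith_mean2_weighted
        (by linarith : (0:ℝ) ≤ 2 - q) (by linarith : (0:ℝ) ≤ q - 1)
        (Real.rpow_nonneg hx0.le (q - 1)) (Real.rpow_nonneg hx0.le (q - 2)) (by ring)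
      have e : (x ^ (q - 1)) ^ (2 - q) * (x ^ (q - 2)) ^ (q - 1) = 1 := by
        rw [← Real.rpow_mul hx0.le, ← Real.rpow_mul hx0.le, ← Real.rpow_add hx0,
          show (q - 1) * (2 - q) + (q - 2) * (q - 1) = 0 by ring, Real.rpow_zero]
      rw [e] at h
      exact h
    have hmul := mul_le_mul_of_nonneg_left htan' hq0.le
    nlinarith [hamgm, hmul]
  have hcont : ContinuousOn F (Set.Ici (2:ℝ)) := fun x hx =>
    (hF' x hx).continuousAt.continuousWithinAt
  have hdiff : DifferentiableOn ℝ F (interior (Set.Ici (2:ℝ))) := by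
    intro x hx
    rw [interior_Ici] at hx
    exact ((hF' x (show (2:ℝ) ≤ x from le_of_lt hx)).differentiableAt).differentiableWithinAt
  have hmono : MonotoneOn F (Set.Ici (2:ℝ)) :=
    monotoneOn_of_deriv_nonneg (convex_Ici 2) hcont hdiff hderiv_nonneg
  have hbase : -1 ≤ F 2 := by
    have h2q : (2:ℝ) * q ≤ (3 - q) * 2 ^ q := by
      have hI := ineq_I hq1.le hq2
      have h21 : (0:ℝ) < 2 ^ (q - 1) := Real.rpow_pos_of_pos (by norm_num) _
      have := mul_le_mul_of_nonneg_right hI h21.le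
      calc (2:ℝ) * q = q * (2 ^ (2 - q) * 2 ^ (q - 1)) := by
            rw [← Real.rpow_add (by norm_num : (0:ℝ) < 2),
              show (2 - q) + (q - 1) = 1 by ring, Real.rpow_one]; ring
        _ ≤ 2 * (3 - q) * 2 ^ (q - 1) := by nlinarith
        _ = (3 - q) * 2 ^ q := by
            rw [show (q : ℝ) = 1 + (q - 1) by ring, Real.rpow_add (by norm_num : (0:ℝ) < 2),
              Real.rpow_one]; ring
    have hF2 : F 2 = (3 - q) * 2 ^ q - 1 - 2 * q := by
      simp only [hF]
      rw [show (2:ℝ) - 1 = 1 by norm_num, Real.one_rpow]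
      ring
    rw [hF2]; linarith
  have hle : F 2 ≤ F u := hmono (by norm_num) hu hu
  have : -1 ≤ F u := le_trans hbase hle
  simp only [hF] at this
  linarith

lemma ineq_II {q a b : ℝ} (hq1 : 1 < q) (hq2 : q ≤ 2) (hb : 0 < b) (hab : 2 * b ≤ a) :
    (a - b) ^ q + q * a * b ^ (q - 1) ≤ (3 - q) * a ^ q + b ^ q := by
  have hu : 2 ≤ a / b := (le_div_iff₀ hb).mpr (by linarith)
  have h := ineq_II_norm hq1 hq2 hu
  have hbq : (0:ℝ) < b ^ q := Real.rpow_pos_of_pos hb _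
  have h2 := mul_le_mul_of_nonneg_right h hbq.le
  have e1 : (a / b - 1) ^ q * b ^ q = (a - b) ^ q := by
    rw [← Real.mul_rpow (by linarith : (0:ℝ) ≤ a / b - 1) hb.le]
    congr 1
    field_simp
  have e2 : (a / b) ^ q * b ^ q = a ^ q := by
    rw [← Real.mul_rpow (by positivity) hb.le]
    congr 1
    field_simp
  have e3 : q * (a / b) * b ^ q = q * a * b ^ (q - 1) := by
    rw [show (q : ℝ) = (q - 1) + 1 by ring]
    rw [Real.rpow_add hb, Real.rpow_one]
    field_simp
    ring
  calc (a - b) ^ q + q * a * b ^ (q - 1)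
      = (a / b - 1) ^ q * b ^ q + q * (a / b) * b ^ q := by rw [e1, e3]
    _ = ((a / b - 1) ^ q + q * (a / b)) * b ^ q := by ring
    _ ≤ ((3 - q) * (a / b) ^ q + 1) * b ^ q := h2
    _ = (3 - q) * a ^ q + b ^ q := by rw [add_mul, one_mul, mul_assoc, e2]

theorem parallelogram_type_inequality (k : ℕ) (q : ℝ) (hq : q ∈ Set.Ioc (1 : ℝ) 2)
    (v w : EuclideanSpace ℝ (Fin k)) :
    ‖v + w‖ ^ q ≤ (3 - q) * ‖v‖ ^ q + q * ‖w‖ ^ (q - 2) * (inner ℝ v w : ℝ) + ‖w‖ ^ q := by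
  obtain ⟨hq1, hq2⟩ := hq
  have hq0 : (0:ℝ) < q := by linarith
  set a : ℝ := ‖v‖ with ha
  set b : ℝ := ‖w‖ with hb
  set t : ℝ := (inner ℝ v w : ℝ) with ht
  have ha0 : 0 ≤ a := norm_nonneg v
  have hb0 : 0 ≤ b := norm_nonneg w
  have hX : ‖v + w‖ ^ (2:ℕ) = a ^ 2 + 2 * t + b ^ 2 := norm_add_sq_real v w
  have hCS : -(a * b) ≤ t := by
    have := abs_real_inner_le_norm v w
    rw [← ht, ← ha, ← hb] at this
    cases' abs_le.mp this with h1 h2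
    linarith
  -- case q = 2
  rcases eq_or_lt_of_le hq2 with hq2e | hq2s
  · subst hq2e
    rw [sub_self, Real.rpow_zero]
    have e : ∀ x : ℝ, 0 ≤ x → x ^ (2:ℝ) = x ^ (2:ℕ) := by
      intro x _; rw [← Real.rpow_natCast x 2]; norm_num
    rw [e _ (norm_nonneg _), e _ ha0, e _ hb0, hX]
    ring_nf
    linarith [le_refl (0:ℝ)]
  -- q < 2 now
  by_cases hbz : b = 0
  · have hw0 : w = 0 := norm_eq_zero.mp hbz
    have ht0 : t = 0 := by rw [ht, hw0]; simp
    have h1 : ‖v + w‖ = a := by rw [hw0, add_zero, ha]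
    rw [h1, hbz, ht0, Real.zero_rpow hq0.ne',
      Real.zero_rpow (by intro h; apply absurd h; intro h2; linarith [sub_eq_zero.mp h2] : q - 2 ≠ 0)]
    have hvq : 0 ≤ a ^ q := Real.rpow_nonneg ha0 q
    nlinarith
  have hbpos : 0 < b := lt_of_le_of_ne hb0 (Ne.symm hbz)
  set X : ℝ := a ^ 2 + 2 * t + b ^ 2 with hXdef
  have hXnn : 0 ≤ X := by rw [← hX]; positivity
  have hpow : ‖v + w‖ ^ q = X ^ (q / 2) := by
    rw [← hX, ← Real.rpow_natCast ‖v + w‖ 2, ← Real.rpow_mul (norm_nonneg _)]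
    congr 1
    push_cast
    ring
  have hp0 : (0:ℝ) ≤ q / 2 := by linarith
  have hp1 : q / 2 ≤ 1 := by linarith
  -- rpow square identities
  have hsq : ∀ c : ℝ, 0 < c → ∀ r : ℝ, (c ^ (2:ℕ)) ^ r = c ^ (2 * r) := by
    intro c hc r
    rw [← Real.rpow_natCast c 2, ← Real.rpow_mul hc.le]
    norm_num
  rcases le_or_gt a (2 * b) with hcase | hcase
  · -- Case A : a ≤ 2b, tangent at b^2
    have htan := tangent_rpow hp0 hp1 hXnn (by positivity : (0:ℝ) < b ^ (2:ℕ))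
    rw [hsq b hbpos (q / 2), hsq b hbpos (q / 2 - 1)] at htan
    rw [show 2 * (q / 2) = q by ring, show 2 * (q / 2 - 1) = q - 2 by ring] at htan
    -- htan : X ^ (q/2) ≤ b^q + (q/2) * b^(q-2) * (X - b^2)
    have hkey : q / 2 * b ^ (q - 2) * a ^ 2 ≤ (3 - q) * a ^ q := by
      rcases eq_or_lt_of_le ha0 with haz | hapos
      · have haz' : a = 0 := haz.symm
        rw [haz', Real.zero_rpow hq0.ne']
        norm_num
      · have hfrac : (a / b) ^ (2 - q) ≤ (2:ℝ) ^ (2 - q) := by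
          apply Real.rpow_le_rpow (by positivity) _ (by linarith)
          rw [div_le_iff₀ hbpos]; linarith
        have hdiv : (a / b) ^ (2 - q) = a ^ (2 - q) * b ^ (q - 2) := by
          rw [Real.div_rpow ha0 hb0, show q - 2 = -(2 - q) by ring, Real.rpow_neg hb0,
            div_eq_mul_inv]
        have hab2 : a ^ 2 * b ^ (q - 2) = a ^ q * (a / b) ^ (2 - q) := by
          rw [hdiv, ← mul_assoc, ← Real.rpow_add hapos,
            show q + (2 - q) = ((2:ℕ):ℝ) by norm_num, Real.rpow_natCast]
        have haqnn : 0 ≤ a ^ q := Real.rpow_nonneg ha0 q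
        have h1 : a ^ 2 * b ^ (q - 2) ≤ a ^ q * 2 ^ (2 - q) := by
          rw [hab2]; exact mul_le_mul_of_nonneg_left hfrac haqnn
        have hI := ineq_I hq1.le hq2
        calc q / 2 * b ^ (q - 2) * a ^ 2 = q / 2 * (a ^ 2 * b ^ (q - 2)) := by ring
          _ ≤ q / 2 * (a ^ q * 2 ^ (2 - q)) := by
              apply mul_le_mul_of_nonneg_left h1 (by linarith)
          _ = q * 2 ^ (2 - q) * a ^ q / 2 := by ring
          _ ≤ 2 * (3 - q) * a ^ q / 2 := by
              apply div_le_div_of_nonneg_right _ (by norm_num)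
              exact mul_le_mul_of_nonneg_right hI haqnn
          _ = (3 - q) * a ^ q := by ring
    calc ‖v + w‖ ^ q = X ^ (q / 2) := hpow
      _ ≤ b ^ q + q / 2 * b ^ (q - 2) * (X - b ^ 2) := htan
      _ = b ^ q + q * b ^ (q - 2) * t + q / 2 * b ^ (q - 2) * a ^ 2 := by
          rw [hXdef]; ring
      _ ≤ (3 - q) * a ^ q + q * b ^ (q - 2) * t + b ^ q := by linarith
  · -- Case B : 2b < a, tangent at (a-b)^2
    have hcb : b < a - b := by linarith
    have hcpos : (0:ℝ) < a - b := by linarith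
    have htan := tangent_rpow hp0 hp1 hXnn (by positivity : (0:ℝ) < (a - b) ^ (2:ℕ))
    rw [hsq (a - b) hcpos (q / 2), hsq (a - b) hcpos (q / 2 - 1)] at htan
    rw [show 2 * (q / 2) = q by ring, show 2 * (q / 2 - 1) = q - 2 by ring] at htan
    have hXc : X - (a - b) ^ 2 = 2 * t + 2 * (a * b) := by rw [hXdef]; ring
    have hXcnn : 0 ≤ X - (a - b) ^ 2 := by rw [hXc]; linarith
    have hmon : (a - b) ^ (q - 2) ≤ b ^ (q - 2) :=
      Real.rpow_le_rpow_of_nonpos hbpos hcb.le (by linarith)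
    have hstep : q / 2 * (a - b) ^ (q - 2) * (X - (a - b) ^ 2)
        ≤ q / 2 * b ^ (q - 2) * (X - (a - b) ^ 2) := by
      apply mul_le_mul_of_nonneg_right _ hXcnn
      apply mul_le_mul_of_nonneg_left hmon (by linarith)
    have hb1 : b ^ (q - 2) * b = b ^ (q - 1) := by
      nth_rewrite 2 [← Real.rpow_one b]
      rw [← Real.rpow_add hbpos]; ring_nf
    have hII := ineq_II hq1 hq2s.le hbpos hcase.le
    calc ‖v + w‖ ^ q = X ^ (q / 2) := hpow
      _ ≤ (a - b) ^ q + q / 2 * (a - b) ^ (q - 2) * (X - (a - b) ^ 2) := htan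
      _ ≤ (a - b) ^ q + q / 2 * b ^ (q - 2) * (X - (a - b) ^ 2) := by linarith
      _ = (a - b) ^ q + q * b ^ (q - 2) * t + q * a * (b ^ (q - 2) * b) := by
          rw [hXc]; ring
      _ = (a - b) ^ q + q * b ^ (q - 2) * t + q * a * b ^ (q - 1) := by rw [hb1]
      _ ≤ (3 - q) * a ^ q + q * b ^ (q - 2) * t + b ^ q := by linarith
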